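/- Every 2-connected bipartite outerplanar graph G admits an orientation D with d⁺_D(v) ≤ min{3, d_G(v) − 1} for every vertex v; since G is bipartite, every such orientation is an AT-orientation, so G is 4-truncated degree-AT. -/

import Mathlib

variable {V : Type*} [Fintype V] [DecidableEq V]

/-- Out-degree of `v` in the digraph (arc set) `D`. -/
def outDeg (D : Finset (V × V)) (v : V) : ℕ := (D.filter fun a => a.1 = v).card

/-- In-degree of `v` in the digraph (arc set) `D`. -/
def inDeg (D : Finset (V × V)) (v : V) : ℕ := (D.filter fun a => a.2 = v).card

/-- An arc set is Eulerian if every vertex has equal in- and out-degree. -/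
def IsEulerian (H : Finset (V × V)) : Prop := ∀ v, outDeg H v = inDeg H v

instance (H : Finset (V × V)) : Decidable (IsEulerian H) := by
  unfold IsEulerian; infer_instance

/-- The Eulerian subdigraphs of `D`. -/
def eulerianSubs (D : Finset (V × V)) : Finset (Finset (V × V)) :=
  D.powerset.filter IsEulerian

/-- `D` is an AT-orientation: the number of even Eulerian subdigraphs differs from
the number of odd ones. -/
def IsAT (D : Finset (V × V)) : Prop :=
  ((eulerianSubs D).filter fun H => Even H.card).card ≠
    ((eulerianSubs D).filter fun H => Odd H.card).card

/-- `D` is an orientation of the graph `G`: every arc is an edge of `G`,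
and each edge of `G` gets exactly one direction. -/
def IsOrientation (G : SimpleGraph V) (D : Finset (V × V)) : Prop :=
  (∀ a ∈ D, G.Adj a.1 a.2) ∧ ∀ u v : V, G.Adj u v → ((u, v) ∈ D ↔ (v, u) ∉ D)

/-- `D` contains a directed closed walk, equivalently a directed cycle. -/
def HasDirCycle (D : Finset (V × V)) : Prop :=
  ∃ (a : V) (l : List V), List.Chain (fun u v => (u, v) ∈ D) a (l ++ [a])

/-- Outerplanar: the vertices can be placed at distinct positions on a circle so that
all edges are pairwise noncrossing chords. -/
def Outerplanar (G : SimpleGraph V) : Prop :=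
  ∃ p : V → ℕ, Function.Injective p ∧ ∀ a b c d : V, G.Adj a b → G.Adj c d →
    ¬ (p a < p c ∧ p c < p b ∧ p b < p d)

/-- 2-connected: at least 3 vertices, connected, and deleting any vertex leaves it connected. -/
def TwoConnected (G : SimpleGraph V) : Prop :=
  3 ≤ Fintype.card V ∧ G.Connected ∧ ∀ v : V, (SimpleGraph.induce {w | w ≠ v} G).Connected

/-- `G` is a cycle: connected and 2-regular. -/
def IsCycleGraph (G : SimpleGraph V) [DecidableRel G.Adj] : Prop :=
  G.Connected ∧ ∀ v, G.degree v = 2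

/-- The arcs of a path/walk given by a list of vertices. -/
def pathArcs (l : List V) : Finset (V × V) := (l.zip l.tail).toFinset

/-- Weighted out-degree. -/
def wOutDeg (D : Finset (V × V)) (w : V × V → ℕ) (v : V) : ℕ :=
  ∑ a ∈ D.filter (fun a => a.1 = v), w a

/-- Weighted in-degree. -/
def wInDeg (D : Finset (V × V)) (w : V × V → ℕ) (v : V) : ℕ :=
  ∑ a ∈ D.filter (fun a => a.2 = v), w a

/-- Weighted Eulerian subdigraph. -/
def IsWEulerian (H : Finset (V × V)) (w : V × V → ℕ) : Prop :=
  ∀ v, wOutDeg H w v = wInDeg H w v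


section AuxStmt6

lemma walk_closed' {W : Type*} {H : SimpleGraph W} {Q : W → Prop}
    (hQ : ∀ x y, H.Adj x y → Q x → Q y) :
    ∀ {x y : W}, H.Walk x y → Q x → Q y := by
  intro x y w
  induction w with
  | nil => exact id
  | cons h q ih => exact fun hx => ih (hQ _ _ h hx)

lemma walk_jump' {W : Type*} {H : SimpleGraph W} {Q : W → Prop} :
    ∀ {x y : W}, H.Walk x y → Q x → ¬ Q y → ∃ a b, H.Adj a b ∧ Q a ∧ ¬ Q b := by
  intro x y w
  induction w with
  | nil => exact fun hx hy => absurd hx hy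
  | @cons a b c h q ih =>
    intro hx hy
    by_cases hb : Q b
    · exact ih hb hy
    · exact ⟨a, b, h, hx, hb⟩

lemma cut_reach' {V : Type*} {G : SimpleGraph V} {z : V} {Q : V → Prop}
    (hconn : (SimpleGraph.induce {w | w ≠ z} G).Connected)
    (hclosed : ∀ x y : V, x ≠ z → y ≠ z → G.Adj x y → Q x → Q y)
    {u v : V} (hu : u ≠ z) (hv : v ≠ z) (hQu : Q u) : Q v := by
  obtain ⟨wk⟩ := hconn.preconnected ⟨u, hu⟩ ⟨v, hv⟩
  exact walk_closed' (Q := fun x : {w | w ≠ z} => Q x.1)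
    (fun x y h hx => hclosed x.1 y.1 x.2 y.2 h hx) wk hQu

/-- `w` is the successor of `u` in the `p`-order. -/
def Cn (p : V → ℕ) (u w : V) : Prop :=
  p u < p w ∧ ∀ x : V, ¬ (p u < p x ∧ p x < p w)

/-- no edge from `u` goes beyond `w` on the right. -/
def Mx (G : SimpleGraph V) (p : V → ℕ) (u w : V) : Prop :=
  ¬ ∃ x, G.Adj u x ∧ p w < p x

/-- The orientation rule. -/
def dirf (G : SimpleGraph V) (p : V → ℕ) (m M : ℕ) (u w : V) : Prop :=
  (Cn p u w ∨ (p u < p w ∧ ¬ Cn p u w ∧ ¬ (p u = m ∧ p w = M) ∧ Mx G p u w)) ∨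
  ((p w = m ∧ p u = M) ∨
    (p w < p u ∧ ¬ Cn p w u ∧ ¬ (p w = m ∧ p u = M) ∧ ¬ Mx G p w u))

lemma even_card_of_eulerian (G : SimpleGraph V) (C : G.Coloring (Fin 2))
    (H : Finset (V × V)) (hH : ∀ a ∈ H, G.Adj a.1 a.2) (he : IsEulerian H) :
    Even H.card := by
  classical
  have key : ∀ a ∈ H, (¬ C a.1 = 0 ↔ C a.2 = 0) := by
    intro a ha
    have hv := C.valid (hH a ha)
    revert hv
    generalize C a.1 = x; generalize C a.2 = y
    revert x y; decide
  have he' : ∀ v, (H.filter fun a => a.1 = v).card = (H.filter fun a => a.2 = v).card := he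
  have fib : ∀ (f : V × V → V) (q : V → Prop)
      (inst2 : DecidablePred (fun a : V × V => q (f a))),
      (@Finset.filter _ _ inst2 H).card
        = ∑ v ∈ Finset.univ.filter (fun v => q v), (H.filter fun a => f a = v).card := by
    intro f q inst2
    rw [Finset.card_eq_sum_card_fiberwise (f := f)
      (t := Finset.univ.filter (fun v => q v))
      (fun a ha => by
        simp only [Finset.coe_filter, Set.mem_setOf_eq] at ha ⊢
        exact ⟨Finset.mem_univ _, ha.2⟩)]
    apply Finset.sum_congr rfl
    intro v hv
    rw [Finset.mem_filter] at hv
    congr 1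
    ext a
    simp only [Finset.mem_filter]
    exact ⟨fun h => ⟨h.1.1, h.2⟩, fun h => ⟨⟨h.1, by rw [h.2]; exact hv.2⟩, h.2⟩⟩
  have hsplit : (H.filter fun a => C a.1 = 0).card + (H.filter fun a => ¬ C a.1 = 0).card
      = H.card := Finset.card_filter_add_card_filter_not (fun a : V × V => C a.1 = 0)
  have e4' : (H.filter fun a => ¬ C a.1 = 0).card = (H.filter fun a => C a.2 = 0).card :=
    congrArg Finset.card (Finset.filter_congr key)
  have e6 : (H.filter fun a => C a.2 = 0).card = (H.filter fun a => C a.1 = 0).card := by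
    rw [fib Prod.snd (fun v => C v = 0) _, fib Prod.fst (fun v => C v = 0) _]
    exact Finset.sum_congr rfl (fun v _ => (he' v).symm)
  exact ⟨(H.filter fun a => C a.1 = 0).card, by omega⟩

lemma isAT_of_bip (G : SimpleGraph V) (D : Finset (V × V))
    (hD : ∀ a ∈ D, G.Adj a.1 a.2) (hbip : G.Colorable 2) : IsAT D := by
  classical
  obtain ⟨C⟩ := hbip
  have heven : ∀ H ∈ eulerianSubs D, Even H.card := by
    intro H hH
    unfold eulerianSubs at hH
    rw [Finset.mem_filter, Finset.mem_powerset] at hH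
    exact even_card_of_eulerian G C H (fun a ha => hD a (hH.1 ha)) hH.2
  have hodd : (eulerianSubs D).filter (fun H => Odd H.card) = ∅ := by
    rw [Finset.filter_eq_empty_iff]
    intro H hH
    exact Nat.not_odd_iff_even.mpr (heven H hH)
  have hmem : ∅ ∈ (eulerianSubs D).filter (fun H => Even (Finset.card H)) := by
    rw [Finset.mem_filter]
    refine ⟨?_, by simp⟩
    unfold eulerianSubs
    rw [Finset.mem_filter]
    exact ⟨Finset.empty_mem_powerset _, fun v => by simp [outDeg, inDeg]⟩
  unfold IsAT
  rw [hodd]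
  simp only [Finset.card_empty]
  exact Nat.pos_iff_ne_zero.mp (Finset.card_pos.mpr ⟨∅, hmem⟩)

end AuxStmt6

set_option maxHeartbeats 1600000 in
theorem stmt6 (G : SimpleGraph V) [DecidableRel G.Adj]
    (h2 : TwoConnected G) (hop : Outerplanar G) (hbip : G.Colorable 2) :
    ∃ D : Finset (V × V), IsOrientation G D ∧
      (∀ v, outDeg D v < min 4 (G.degree v)) ∧ IsAT D := by
  classical
  obtain ⟨hcard, hconn, hcut⟩ := h2
  obtain ⟨p, hinj, hcross⟩ := hop
  have hne : Nonempty V := Fintype.card_pos_iff.mp (by omega)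
  obtain ⟨vmin, -, hminu⟩ := Finset.exists_min_image Finset.univ p
    ⟨Classical.arbitrary V, Finset.mem_univ _⟩
  obtain ⟨vmax, -, hmaxu⟩ := Finset.exists_max_image Finset.univ p
    ⟨Classical.arbitrary V, Finset.mem_univ _⟩
  have hmin' : ∀ x : V, p vmin ≤ p x := fun x => hminu x (Finset.mem_univ x)
  have hmax' : ∀ x : V, p x ≤ p vmax := fun x => hmaxu x (Finset.mem_univ x)
  have hpne : ∀ {x y : V}, x ≠ y → p x ≠ p y := fun h hpe => h (hinj hpe)
  have hadjne : ∀ {x y : V}, G.Adj x y → p x ≠ p y := fun h => hpne h.ne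
  have hthird : ∀ u w : V, ∃ x : V, x ≠ u ∧ x ≠ w := by
    intro u w
    by_contra h
    push_neg at h
    have hsub : (Finset.univ : Finset V) ⊆ {u, w} := by
      intro x _
      by_cases h1 : x = u
      · simp [h1]
      · simp [h x h1]
    have hle := Finset.card_le_card hsub
    have h2 : ({u, w} : Finset V).card ≤ 2 := by
      refine le_trans (Finset.card_insert_le u {w}) ?_
      simp
    rw [Finset.card_univ] at hle
    omega
  -- Step A1: consecutive vertices in the p-order are adjacent
  have A1 : ∀ u w : V, p u < p w → (∀ x : V, ¬ (p u < p x ∧ p x < p w)) → G.Adj u w := by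
    intro u w hul hbet
    by_contra hadj
    obtain ⟨wk⟩ := hconn.preconnected u w
    obtain ⟨x, y, hxy, hx, hy⟩ := walk_jump' (Q := fun z => p z ≤ p u) wk le_rfl (by omega)
    push_neg at hy
    have hy' : p w ≤ p y := by
      rcases le_or_gt (p w) (p y) with h | h
      · exact h
      · exact absurd ⟨hy, h⟩ (hbet y)
    have hSne : (Finset.univ.filter
        (fun e : V × V => G.Adj e.1 e.2 ∧ p e.1 ≤ p u ∧ p w ≤ p e.2)).Nonempty :=
      ⟨(x, y), by simp only [Finset.mem_filter, Finset.mem_univ, true_and]; exact ⟨hxy, hx, hy'⟩⟩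
    obtain ⟨⟨a, b⟩, habmem, hablen⟩ :=
      Finset.exists_min_image _ (fun e : V × V => p e.2 - p e.1) hSne
    simp only [Finset.mem_filter, Finset.mem_univ, true_and] at habmem
    obtain ⟨hab, hau, hwb⟩ := habmem
    have hinner : ∀ c d : V, G.Adj c d → p c ≤ p u → p w ≤ p d → p a ≤ p c → p d ≤ p b →
        p c = p a ∧ p d = p b := by
      intro c d hcd hcu hwd hac hdb
      have := hablen (c, d)
        (by simp only [Finset.mem_filter, Finset.mem_univ, true_and]; exact ⟨hcd, hcu, hwd⟩)
      simp only at this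
      omega
    by_cases hca : p a = p u
    · by_cases hcb : p b = p w
      · exact hadj (by rw [hinj hca, hinj hcb] at hab; exact hab)
      · have hwb' : p w < p b := lt_of_le_of_ne hwb fun h => hcb h.symm
        have hub : u ≠ b := fun h => by rw [h] at hul; omega
        have hwbne : w ≠ b := fun h => by rw [h] at hwb'; omega
        have hclosed : ∀ s t : V, s ≠ b → t ≠ b → G.Adj s t →
            (p w ≤ p s ∧ p s < p b) → (p w ≤ p t ∧ p t < p b) := by
          rintro s t hsb htb hst ⟨hs1, hs2⟩
          have htbne : p t ≠ p b := hpne htb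
          by_contra hq
          push_neg at hq
          rcases lt_or_ge (p t) (p w) with hlt | hge
          · have htu : p t ≤ p u := by
              rcases le_or_gt (p t) (p u) with h | h
              · exact h
              · exact absurd ⟨h, hlt⟩ (hbet t)
            have hat : p a ≤ p t := by
              by_contra hta
              push_neg at hta
              exact hcross t s a b hst.symm hab ⟨hta, by omega, by omega⟩
            have := hinner t s hst.symm htu hs1 hat (le_of_lt hs2)
            omega
          · have hbt : p b < p t := lt_of_le_of_ne (hq hge) htbne.symm
            exact hcross a b s t hab hst ⟨by omega, hs2, hbt⟩
        have hQu := cut_reach' (hcut b) hclosed hwbne hub ⟨le_rfl, hwb'⟩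
        omega
    · have hca' : p a < p u := lt_of_le_of_ne hau hca
      have hua : u ≠ a := fun h => by rw [h] at hca'; omega
      have hba : b ≠ a := fun h => by rw [h] at hwb; omega
      have hclosed : ∀ s t : V, s ≠ a → t ≠ a → G.Adj s t →
          (p a < p s ∧ p s ≤ p u) → (p a < p t ∧ p t ≤ p u) := by
        rintro s t hsa hta hst ⟨hs1, hs2⟩
        by_contra hq
        push_neg at hq
        rcases le_or_gt (p t) (p a) with h1 | h1
        · have h1' : p t < p a := lt_of_le_of_ne h1 (hpne hta)
          exact hcross t s a b hst.symm hab ⟨h1', hs1, by omega⟩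
        · have h2 : p u < p t := hq h1
          have h4 : p w ≤ p t := by
            rcases le_or_gt (p w) (p t) with h | h
            · exact h
            · exact absurd ⟨h2, h⟩ (hbet t)
          have h5 : p t ≤ p b := by
            by_contra h6
            push_neg at h6
            exact hcross a b s t hab hst ⟨by omega, by omega, h6⟩
          have := hinner s t hst hs2 h4 (le_of_lt hs1) h5
          omega
      have hQb := cut_reach' (hcut a) hclosed hua hba ⟨hca', le_rfl⟩
      omega
  -- Step A2: the extreme vertices are adjacent
  have A2 : G.Adj vmin vmax := by
    by_contra hadj
    obtain ⟨z, hz⟩ := Fintype.exists_ne_of_one_lt_card (by omega) vmin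
    obtain ⟨wk⟩ := hconn.preconnected vmin z
    obtain ⟨x, y, hxy, hx, hy⟩ := walk_jump' (Q := fun t => t = vmin) wk rfl hz
    have hNne : (Finset.univ.filter (fun t => G.Adj vmin t)).Nonempty :=
      ⟨y, by simp only [Finset.mem_filter, Finset.mem_univ, true_and]; rw [← hx]; exact hxy⟩
    obtain ⟨bs, hbsmem, hbsmax⟩ := Finset.exists_max_image _ p hNne
    simp only [Finset.mem_filter, Finset.mem_univ, true_and] at hbsmem
    have hbsmax' : ∀ t, G.Adj vmin t → p t ≤ p bs := fun t ht =>
      hbsmax t (by simp only [Finset.mem_filter, Finset.mem_univ, true_and]; exact ht)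
    have h1 : vmin ≠ bs := hbsmem.ne
    have h2 : vmax ≠ bs := fun h => hadj (h ▸ hbsmem)
    have hclosed : ∀ s t : V, s ≠ bs → t ≠ bs → G.Adj s t → p s < p bs → p t < p bs := by
      intro s t hsb htb hst hs
      by_contra hq
      push_neg at hq
      have hq' : p bs < p t := lt_of_le_of_ne hq (hpne htb).symm
      by_cases hs0 : s = vmin
      · rw [hs0] at hst
        exact absurd (hbsmax' t hst) (by omega)
      · have hvs : p vmin < p s := lt_of_le_of_ne (hmin' s) (hpne (Ne.symm hs0))
        exact hcross vmin bs s t hbsmem hst ⟨hvs, hs, hq'⟩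
    have hfin := cut_reach' (hcut bs) hclosed h1 h2
      (lt_of_le_of_ne (hmin' bs) (hpne h1))
    exact absurd (hmax' bs) (by omega)
  -- basic facts about the orientation rule
  have hCnE : ∀ u w : V, Cn p u w → ¬ (p u = p vmin ∧ p w = p vmax) := by
    rintro u w hc ⟨he1, he2⟩
    obtain ⟨x, hxu, hxw⟩ := hthird u w
    have h1 : p u < p x := by
      have := hmin' x
      have := hpne (Ne.symm hxu)
      omega
    have h2 : p x < p w := by
      have := hmax' x
      have := hpne hxw
      omega
    exact hc.2 x ⟨h1, h2⟩
  have hdirchar : ∀ u w : V, p u < p w →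
      (dirf G p (p vmin) (p vmax) u w ↔ ¬ dirf G p (p vmin) (p vmax) w u) := by
    intro u w hlt
    have hnlt : ¬ p w < p u := by omega
    have hnE1 : ¬ (p w = p vmin ∧ p u = p vmax) := by
      rintro ⟨-, h⟩
      have := hmax' w
      omega
    have hnC : ¬ Cn p w u := fun h => hnlt h.1
    have hCE := hCnE u w
    simp only [dirf]
    constructor
    · rintro ((hC | ⟨-, hnCn, hnE, hM⟩) | (hE' | ⟨hwlt, -⟩)) h
      · rcases h with (hCn' | ⟨hwlt, -⟩) | (hE | ⟨-, hnCn', -, -⟩)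
        · exact hnC hCn'
        · exact hnlt hwlt
        · exact hCE hC hE
        · exact hnCn' hC
      · rcases h with (hCn' | ⟨hwlt', -⟩) | (hE | ⟨-, -, -, hnM⟩)
        · exact hnC hCn'
        · exact hnlt hwlt'
        · exact hnE hE
        · exact hnM hM
      · exact hnE1 hE'
      · exact hnlt hwlt
    · intro h
      by_cases hC : Cn p u w
      · exact Or.inl (Or.inl hC)
      · by_cases hE : p u = p vmin ∧ p w = p vmax
        · exact absurd (Or.inr (Or.inl hE)) h
        · by_cases hM : Mx G p u w
          · exact Or.inl (Or.inr ⟨hlt, hC, hE, hM⟩)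
          · exact absurd (Or.inr (Or.inr ⟨hlt, hC, hE, hM⟩)) h
  have hdiriff : ∀ u w : V, G.Adj u w →
      (dirf G p (p vmin) (p vmax) u w ↔ ¬ dirf G p (p vmin) (p vmax) w u) := by
    intro u w hadj
    rcases lt_or_gt_of_ne (hadjne hadj) with h | h
    · exact hdirchar u w h
    · rw [hdirchar w u h]
      exact not_not.symm
  -- the arc set
  set D : Finset (V × V) :=
    Finset.univ.filter (fun a => G.Adj a.1 a.2 ∧ dirf G p (p vmin) (p vmax) a.1 a.2) with hDeq
  have hDmem : ∀ a : V × V, a ∈ D ↔ G.Adj a.1 a.2 ∧ dirf G p (p vmin) (p vmax) a.1 a.2 := by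
    intro a
    rw [hDeq, Finset.mem_filter]
    simp
  -- out-degree as a vertex count
  have hout : ∀ v, outDeg D v
      = (Finset.univ.filter (fun w => G.Adj v w ∧ dirf G p (p vmin) (p vmax) v w)).card := by
    intro v
    have himg : D.filter (fun a => a.1 = v)
        = (Finset.univ.filter (fun w => G.Adj v w ∧ dirf G p (p vmin) (p vmax) v w)).image
            (fun w => (v, w)) := by
      ext a
      obtain ⟨x, y⟩ := a
      constructor
      · intro h
        rw [Finset.mem_filter] at h
        obtain ⟨hD, h1⟩ := h
        rw [hDmem] at hD
        simp only at h1
        subst h1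
        rw [Finset.mem_image]
        exact ⟨y, Finset.mem_filter.mpr ⟨Finset.mem_univ _, hD⟩, rfl⟩
      · intro h
        rw [Finset.mem_image] at h
        obtain ⟨w, hw, heq⟩ := h
        rw [Finset.mem_filter] at hw
        obtain ⟨rfl, rfl⟩ : v = x ∧ w = y := Prod.mk.injEq _ _ _ _ ▸ heq
        exact Finset.mem_filter.mpr ⟨(hDmem _).mpr hw.2, rfl⟩
    rw [outDeg, himg,
      Finset.card_image_of_injective _ (fun a b h => by simpa using congrArg Prod.snd h)]
  -- every vertex has an incoming arc
  have hback : ∀ v : V, ∃ u : V, G.Adj u v ∧ dirf G p (p vmin) (p vmax) u v := by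
    intro v
    by_cases hv : v = vmin
    · subst hv
      refine ⟨vmax, A2.symm, ?_⟩
      simp only [dirf]
      exact Or.inr (Or.inl ⟨trivial, trivial⟩)
    · have hvm : p vmin < p v := lt_of_le_of_ne (hmin' v) (hpne (Ne.symm hv))
      have hSne : (Finset.univ.filter (fun x => p x < p v)).Nonempty :=
        ⟨vmin, by simp only [Finset.mem_filter, Finset.mem_univ, true_and]; exact hvm⟩
      obtain ⟨u, humem, humax⟩ := Finset.exists_max_image _ p hSne
      simp only [Finset.mem_filter, Finset.mem_univ, true_and] at humem
      have hcons : Cn p u v := by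
        refine ⟨humem, fun x hx => ?_⟩
        have := humax x (by simp only [Finset.mem_filter, Finset.mem_univ, true_and]; exact hx.2)
        omega
      exact ⟨u, A1 u v humem hcons.2, by simp only [dirf]; exact Or.inl (Or.inl hcons)⟩
  -- out-degree at most 3
  have houtdeg3 : ∀ v : V,
      (Finset.univ.filter (fun w => G.Adj v w ∧ dirf G p (p vmin) (p vmax) v w)).card ≤ 3 := by
    intro v
    have hc1 : (Finset.univ.filter (fun w => G.Adj v w ∧ Cn p v w)).card ≤ 1 := by
      rw [Finset.card_le_one]
      intro a ha b hb
      simp only [Finset.mem_filter, Finset.mem_univ, true_and] at ha hb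
      rcases lt_trichotomy (p a) (p b) with h | h | h
      · exact absurd ⟨ha.2.1, h⟩ (hb.2.2 a)
      · exact hinj h
      · exact absurd ⟨hb.2.1, h⟩ (ha.2.2 b)
    have hc2 : (Finset.univ.filter (fun w : V => p w = p vmin ∧ p v = p vmax)).card ≤ 1 := by
      rw [Finset.card_le_one]
      intro a ha b hb
      simp only [Finset.mem_filter, Finset.mem_univ, true_and] at ha hb
      exact hinj (ha.1.trans hb.1.symm)
    have hc3 : (Finset.univ.filter
        (fun w => G.Adj v w ∧ p v < p w ∧ Mx G p v w)).card ≤ 1 := by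
      rw [Finset.card_le_one]
      intro a ha b hb
      simp only [Finset.mem_filter, Finset.mem_univ, true_and] at ha hb
      rcases lt_trichotomy (p a) (p b) with h | h | h
      · exact absurd ⟨b, hb.1, h⟩ ha.2.2
      · exact hinj h
      · exact absurd ⟨a, ha.1, h⟩ hb.2.2
    have hc4 : (Finset.univ.filter
        (fun w => G.Adj v w ∧ p w < p v ∧ ¬ Mx G p w v)).card ≤ 1 := by
      rw [Finset.card_le_one]
      intro a ha b hb
      simp only [Finset.mem_filter, Finset.mem_univ, true_and, Mx, not_not] at ha hb
      rcases lt_trichotomy (p a) (p b) with h | h | h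
      · obtain ⟨x, hx1, hx2⟩ := hb.2.2
        exact absurd ⟨h, hb.2.1, hx2⟩ (hcross a v b x ha.1.symm hx1)
      · exact hinj h
      · obtain ⟨x, hx1, hx2⟩ := ha.2.2
        exact absurd ⟨h, ha.2.1, hx2⟩ (hcross b v a x hb.1.symm hx1)
    by_cases hv : p v = p vmax
    · have hsub : (Finset.univ.filter (fun w => G.Adj v w ∧ dirf G p (p vmin) (p vmax) v w))
          ⊆ (Finset.univ.filter (fun w : V => p w = p vmin ∧ p v = p vmax))
            ∪ (Finset.univ.filter (fun w => G.Adj v w ∧ p w < p v ∧ ¬ Mx G p w v)) := by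
        intro w hw
        change w ∈ Finset.filter _ Finset.univ at hw
        replace hw := (Finset.mem_filter.mp hw).2
        simp only [Finset.mem_filter, Finset.mem_univ, true_and, Finset.mem_union, dirf] at hw ⊢
        obtain ⟨hadj, hd⟩ := hw
        have hwv : p w < p v := by
          have h1 := hmax' w
          have h2 : p w ≠ p v := hpne (G.ne_of_adj hadj).symm
          omega
        rcases hd with (hC | hR) | (hE | hL)
        · exact absurd hC.1 (by omega)
        · exact absurd hR.1 (by omega)
        · exact Or.inl hE
        · exact Or.inr ⟨hadj, hL.1, hL.2.2.2⟩
      calc (Finset.univ.filter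
            (fun w => G.Adj v w ∧ dirf G p (p vmin) (p vmax) v w)).card
          ≤ _ := Finset.card_le_card hsub
        _ ≤ _ := Finset.card_union_le _ _
        _ ≤ 3 := by omega
    · have hsub : (Finset.univ.filter (fun w => G.Adj v w ∧ dirf G p (p vmin) (p vmax) v w))
          ⊆ ((Finset.univ.filter (fun w => G.Adj v w ∧ Cn p v w))
            ∪ (Finset.univ.filter (fun w => G.Adj v w ∧ p v < p w ∧ Mx G p v w)))
            ∪ (Finset.univ.filter (fun w => G.Adj v w ∧ p w < p v ∧ ¬ Mx G p w v)) := by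
        intro w hw
        change w ∈ Finset.filter _ Finset.univ at hw
        replace hw := (Finset.mem_filter.mp hw).2
        simp only [Finset.mem_filter, Finset.mem_univ, true_and, Finset.mem_union, dirf] at hw ⊢
        obtain ⟨hadj, hd⟩ := hw
        rcases hd with (hC | hR) | (hE | hL)
        · exact Or.inl (Or.inl ⟨hadj, hC⟩)
        · exact Or.inl (Or.inr ⟨hadj, hR.1, hR.2.2.2⟩)
        · exact absurd hE.2 hv
        · exact Or.inr ⟨hadj, hL.1, hL.2.2.2⟩
      calc (Finset.univ.filter
            (fun w => G.Adj v w ∧ dirf G p (p vmin) (p vmax) v w)).card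
          ≤ _ := Finset.card_le_card hsub
        _ ≤ _ := Finset.card_union_le _ _
        _ ≤ 3 := by
            have := Finset.card_union_le
              (Finset.univ.filter (fun w => G.Adj v w ∧ Cn p v w))
              (Finset.univ.filter (fun w => G.Adj v w ∧ p v < p w ∧ Mx G p v w))
            omega
  -- out-degree less than the degree
  have hdeg : ∀ v : V,
      (Finset.univ.filter (fun w => G.Adj v w ∧ dirf G p (p vmin) (p vmax) v w)).card
        < G.degree v := by
    intro v
    obtain ⟨u, hu1, hu2⟩ := hback v
    have hsub : (Finset.univ.filter (fun w => G.Adj v w ∧ dirf G p (p vmin) (p vmax) v w))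
        ⊆ G.neighborFinset v := by
      intro w hw
      simp only [Finset.mem_filter, Finset.mem_univ, true_and] at hw
      rw [SimpleGraph.mem_neighborFinset]
      exact hw.1
    have humem : u ∈ G.neighborFinset v := by
      rw [SimpleGraph.mem_neighborFinset]
      exact hu1.symm
    have hunot : u ∉ (Finset.univ.filter
        (fun w => G.Adj v w ∧ dirf G p (p vmin) (p vmax) v w)) := by
      simp only [Finset.mem_filter, Finset.mem_univ, true_and]
      rintro ⟨-, hd⟩
      exact (hdiriff u v hu1).mp hu2 hd
    calc (Finset.univ.filter (fun w => G.Adj v w ∧ dirf G p (p vmin) (p vmax) v w)).card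
        < (G.neighborFinset v).card :=
          Finset.card_lt_card ((Finset.ssubset_iff_of_subset hsub).mpr ⟨u, humem, hunot⟩)
      _ = G.degree v := G.card_neighborFinset_eq_degree v
  refine ⟨D, ⟨fun a ha => ((hDmem a).mp ha).1, ?_⟩, ?_,
    isAT_of_bip G D (fun a ha => ((hDmem a).mp ha).1) hbip⟩
  · intro u w hadj
    rw [hDmem, hDmem]
    simp only
    have h1 := hdiriff u w hadj
    have h2 := hadj.symm
    tauto
  · intro v
    rw [hout v, lt_min_iff]
    exact ⟨by have := houtdeg3 v; omega, hdeg v⟩
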